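/- Let f₁, f₂ : (0,∞) → ℝ be twice differentiable with f₁(1)=f₁'(1)=0, f₂(1)=f₂'(1)=0, f₂''(x) > 0 for all x > 0, and suppose α ≤ f₁''(x)/f₂''(x) ≤ β for all x > 0 with 0 ≤ α < β. Then for all a, b > 0: α·a·f₂(b/a) ≤ a·f₁(b/a) ≤ β·a·f₂(b/a). -/

import Mathlib

open Set

private lemma key_nonneg (h : ℝ → ℝ)
    (hd : ∀ x ∈ Set.Ioi (0:ℝ), DifferentiableAt ℝ h x)
    (hd' : ∀ x ∈ Set.Ioi (0:ℝ), DifferentiableAt ℝ (deriv h) x)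
    (h1 : h 1 = 0) (h1' : deriv h 1 = 0)
    (h2 : ∀ x ∈ Set.Ioi (0:ℝ), 0 ≤ deriv (deriv h) x)
    {x : ℝ} (hx : 0 < x) : 0 ≤ h x := by
  have mono : MonotoneOn (deriv h) (Set.Ioi 0) := by
    apply monotoneOn_of_deriv_nonneg (convex_Ioi 0)
      (fun t ht => (hd' t ht).continuousAt.continuousWithinAt)
    · rw [interior_Ioi]
      exact fun t ht => (hd' t ht).differentiableWithinAt
    · rw [interior_Ioi]; exact h2
  rcases le_total x 1 with hx1 | hx1
  · -- antitone on Ioc 0 1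
    have anti : AntitoneOn h (Set.Ioc 0 1) := by
      apply antitoneOn_of_deriv_nonpos (convex_Ioc 0 1)
        (fun t ht => (hd t ht.1).continuousAt.continuousWithinAt)
      · rw [interior_Ioc]
        exact fun t ht => (hd t ht.1).differentiableWithinAt
      · rw [interior_Ioc]
        intro t ht
        have := mono ht.1 (show (1:ℝ) ∈ Set.Ioi 0 by norm_num) ht.2.le
        rwa [h1'] at this
    have := anti ⟨hx, hx1⟩ ⟨one_pos, le_refl 1⟩ hx1
    rwa [h1] at this
  · have mon : MonotoneOn h (Set.Ici 1) := by
      apply monotoneOn_of_deriv_nonneg (convex_Ici 1)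
        (fun t ht => (hd t (Set.mem_Ioi.mpr (lt_of_lt_of_le one_pos ht))).continuousAt.continuousWithinAt)
      · rw [interior_Ici]
        exact fun t ht => (hd t (Set.mem_Ioi.mpr (lt_trans one_pos ht))).differentiableWithinAt
      · rw [interior_Ici]
        intro t ht
        have := mono (show (1:ℝ) ∈ Set.Ioi 0 by norm_num) (Set.mem_Ioi.mpr (lt_trans one_pos ht)) ht.le
        rwa [h1'] at this
    have := mon (Set.self_mem_Ici) hx1 hx1
    rwa [h1] at this

private lemma comb_deriv (f₁ f₂ : ℝ → ℝ) (c₁ c₂ : ℝ)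
    (hd₁ : ∀ x ∈ Set.Ioi (0:ℝ), DifferentiableAt ℝ f₁ x)
    (hd₂ : ∀ x ∈ Set.Ioi (0:ℝ), DifferentiableAt ℝ f₂ x)
    {x : ℝ} (hx : x ∈ Set.Ioi (0:ℝ)) :
    deriv (fun t => c₁ * f₁ t + c₂ * f₂ t) x = c₁ * deriv f₁ x + c₂ * deriv f₂ x := by
  rw [deriv_fun_add ((hd₁ x hx).const_mul c₁) ((hd₂ x hx).const_mul c₂),
    deriv_const_mul c₁ (hd₁ x hx), deriv_const_mul c₂ (hd₂ x hx)]

private lemma comb_deriv2 (f₁ f₂ : ℝ → ℝ) (c₁ c₂ : ℝ)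
    (hd₁ : ∀ x ∈ Set.Ioi (0:ℝ), DifferentiableAt ℝ f₁ x)
    (hd₁' : ∀ x ∈ Set.Ioi (0:ℝ), DifferentiableAt ℝ (deriv f₁) x)
    (hd₂ : ∀ x ∈ Set.Ioi (0:ℝ), DifferentiableAt ℝ f₂ x)
    (hd₂' : ∀ x ∈ Set.Ioi (0:ℝ), DifferentiableAt ℝ (deriv f₂) x)
    {x : ℝ} (hx : x ∈ Set.Ioi (0:ℝ)) :
    deriv (deriv (fun t => c₁ * f₁ t + c₂ * f₂ t)) x
      = c₁ * deriv (deriv f₁) x + c₂ * deriv (deriv f₂) x := by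
  have hev : deriv (fun t => c₁ * f₁ t + c₂ * f₂ t)
      =ᶠ[nhds x] (fun t => c₁ * deriv f₁ t + c₂ * deriv f₂ t) := by
    filter_upwards [isOpen_Ioi.mem_nhds hx] with t ht
    exact comb_deriv f₁ f₂ c₁ c₂ hd₁ hd₂ ht
  rw [hev.deriv_eq]
  rw [deriv_fun_add ((hd₁' x hx).const_mul c₁) ((hd₂' x hx).const_mul c₂),
    deriv_const_mul c₁ (hd₁' x hx), deriv_const_mul c₂ (hd₂' x hx)]

theorem phi_ratio_bounds (f₁ f₂ : ℝ → ℝ) (α β : ℝ)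
    (hd₁ : ∀ x ∈ Set.Ioi (0:ℝ), DifferentiableAt ℝ f₁ x)
    (hd₁' : ∀ x ∈ Set.Ioi (0:ℝ), DifferentiableAt ℝ (deriv f₁) x)
    (hd₂ : ∀ x ∈ Set.Ioi (0:ℝ), DifferentiableAt ℝ f₂ x)
    (hd₂' : ∀ x ∈ Set.Ioi (0:ℝ), DifferentiableAt ℝ (deriv f₂) x)
    (hf₁1 : f₁ 1 = 0) (hf₁1' : deriv f₁ 1 = 0)
    (hf₂1 : f₂ 1 = 0) (hf₂1' : deriv f₂ 1 = 0)
    (hf₂'' : ∀ x ∈ Set.Ioi (0:ℝ), 0 < deriv (deriv f₂) x)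
    (hα : 0 ≤ α) (hαβ : α < β)
    (hratio : ∀ x ∈ Set.Ioi (0:ℝ),
      α ≤ deriv (deriv f₁) x / deriv (deriv f₂) x ∧
      deriv (deriv f₁) x / deriv (deriv f₂) x ≤ β)
    (a b : ℝ) (ha : 0 < a) (hb : 0 < b) :
    α * (a * f₂ (b / a)) ≤ a * f₁ (b / a) ∧ a * f₁ (b / a) ≤ β * (a * f₂ (b / a)) := by
  set x := b / a with hxdef
  have hx : x ∈ Set.Ioi (0:ℝ) := div_pos hb ha
  have h1mem : (1:ℝ) ∈ Set.Ioi (0:ℝ) := by norm_num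
  -- lower bound
  have hlow : 0 ≤ f₁ x - α * f₂ x := by
    have key := key_nonneg (fun t => (1:ℝ) * f₁ t + (-α) * f₂ t)
      (fun t ht => ((hd₁ t ht).const_mul 1).add ((hd₂ t ht).const_mul (-α)))
      (fun t ht => by
        have hev : deriv (fun t => (1:ℝ) * f₁ t + (-α) * f₂ t)
            =ᶠ[nhds t] (fun s => (1:ℝ) * deriv f₁ s + (-α) * deriv f₂ s) := by
          filter_upwards [isOpen_Ioi.mem_nhds ht] with s hs
          exact comb_deriv f₁ f₂ 1 (-α) hd₁ hd₂ hs
        exact (((hd₁' t ht).const_mul 1).add ((hd₂' t ht).const_mul (-α))).congr_of_eventuallyEq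
          hev)
      (by simp [hf₁1, hf₂1])
      (by rw [comb_deriv f₁ f₂ 1 (-α) hd₁ hd₂ h1mem]; simp [hf₁1', hf₂1'])
      (fun t ht => by
        rw [comb_deriv2 f₁ f₂ 1 (-α) hd₁ hd₁' hd₂ hd₂' ht]
        have h2pos := hf₂'' t ht
        have := (hratio t ht).1
        rw [le_div_iff₀ h2pos] at this
        nlinarith)
      (Set.mem_Ioi.mp hx)
    simpa using key
  have hhigh : 0 ≤ β * f₂ x - f₁ x := by
    have key := key_nonneg (fun t => (-1:ℝ) * f₁ t + β * f₂ t)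
      (fun t ht => ((hd₁ t ht).const_mul (-1)).add ((hd₂ t ht).const_mul β))
      (fun t ht => by
        have hev : deriv (fun t => (-1:ℝ) * f₁ t + β * f₂ t)
            =ᶠ[nhds t] (fun s => (-1:ℝ) * deriv f₁ s + β * deriv f₂ s) := by
          filter_upwards [isOpen_Ioi.mem_nhds ht] with s hs
          exact comb_deriv f₁ f₂ (-1) β hd₁ hd₂ hs
        exact (((hd₁' t ht).const_mul (-1)).add ((hd₂' t ht).const_mul β)).congr_of_eventuallyEq
          hev)
      (by simp [hf₁1, hf₂1])
      (by rw [comb_deriv f₁ f₂ (-1) β hd₁ hd₂ h1mem]; simp [hf₁1', hf₂1'])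
      (fun t ht => by
        rw [comb_deriv2 f₁ f₂ (-1) β hd₁ hd₁' hd₂ hd₂' ht]
        have h2pos := hf₂'' t ht
        have := (hratio t ht).2
        rw [div_le_iff₀ h2pos] at this
        nlinarith)
      (Set.mem_Ioi.mp hx)
    simpa [add_comm] using key
  constructor <;> nlinarith
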